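/- arXiv:1707.08598 — 2 statements merged into one kernel-verified Lean document; each statement's English description precedes it below -/
import Mathlib

section
/- Fix k ≥ 1, a profile V over C, let w = R_k(V), and let x ∈ C\{w}. If v'_i is a manipulative vote of voter i at V in favour of x, then exactly one of the following holds: (Type 1) x ∉ top_k(v_i), w ∉ top_k(v_i), x ≻_i w, x ∈ top_k(v'_i) and w ∉ top_k(v'_i); or (Type 2) x ∈ top_k(v_i), w ∈ top_k(v_i), x ≻_i w, x ∈ top_k(v'_i) and w ∉ top_k(v'_i). Moreover, Type 2 can occur only when k ≥ 2. -/
open scoped Classical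

namespace Paper

variable {C I : Type*}

/-- The set of the `k` highest-ranked candidates in the vote `v`. -/
noncomputable def topk [Fintype C] (k : ℕ) (v : LinearOrder C) : Finset C :=
  Finset.univ.filter fun c => (Finset.univ.filter fun d => v.lt c d).card < k

/-- The highest-ranked candidate of the vote `v`. -/
noncomputable def top [Fintype C] [Nonempty C] (v : LinearOrder C) : C :=
  @Finset.max' C v Finset.univ Finset.univ_nonempty

/-- The `k`-approval score of candidate `c` in the profile `V`. -/
noncomputable def sck [Fintype C] [Fintype I] (k : ℕ) (V : I → LinearOrder C) (c : C) : ℕ :=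
  (Finset.univ.filter fun i => c ∈ topk k (V i)).card

/-- The `k`-approval winner of the profile `V` with tie-breaking order `tb`:
the `tb`-greatest candidate among the candidates with maximal `k`-approval score;
equivalently, the unique candidate beating every other candidate. -/
noncomputable def winner [Fintype C] [Nonempty C] [Fintype I] (k : ℕ) (tb : LinearOrder C)
    (V : I → LinearOrder C) : C :=
  @Finset.max' C tb (Finset.univ.filter fun x => ∀ y, sck k V y ≤ sck k V x)
    (by
      obtain ⟨b, -, hb⟩ := Finset.exists_max_image Finset.univ (sck k V)
        ⟨Classical.arbitrary C, Finset.mem_univ _⟩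
      exact ⟨b, Finset.mem_filter.mpr ⟨Finset.mem_univ _, fun y => hb y (Finset.mem_univ y)⟩⟩)

/-- `v'` is a manipulative vote of voter `i` at the profile `V`. -/
def manip [Fintype C] [Nonempty C] [Fintype I] [DecidableEq I] (k : ℕ) (tb : LinearOrder C)
    (V : I → LinearOrder C) (i : I) (v' : LinearOrder C) : Prop :=
  (V i).lt (winner k tb V) (winner k tb (Function.update V i v'))

/-- `v'` is a level-1 strategy of voter `i` at the profile `V`: the outcome it produces is
strictly preferred (w.r.t. `i`'s sincere vote) to every other feasible outcome. -/
def level1 [Fintype C] [Nonempty C] [Fintype I] [DecidableEq I] (k : ℕ) (tb : LinearOrder C)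
    (V : I → LinearOrder C) (i : I) (v' : LinearOrder C) : Prop :=
  ∀ u : LinearOrder C,
    winner k tb (Function.update V i u) ≠ winner k tb (Function.update V i v') →
    (V i).lt (winner k tb (Function.update V i u)) (winner k tb (Function.update V i v'))

/-- `v` is a minimal manipulative vote of voter `i` at `V`. -/
def minimalManip [Fintype C] [Nonempty C] [Fintype I] [DecidableEq I] (k : ℕ)
    (tb : LinearOrder C) (V : I → LinearOrder C) (i : I) (v : LinearOrder C) : Prop :=
  manip k tb V i v ∧ ∀ v', manip k tb V i v' →
    ((topk k (V i)) \ (topk k v)).card ≤ ((topk k (V i)) \ (topk k v')).card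


lemma mem_topk' [Fintype C] {k : ℕ} {v : LinearOrder C} {c : C} :
    c ∈ topk k v ↔ (Finset.univ.filter fun d => v.lt c d).card < k := by
  simp [topk]

lemma topk_upward [Fintype C] {k : ℕ} {v : LinearOrder C} {c d : C}
    (h : v.lt c d) (hc : c ∈ topk k v) : d ∈ topk k v := by
  letI := v
  rw [mem_topk'] at hc ⊢
  refine lt_of_le_of_lt (Finset.card_le_card ?_) hc
  intro e he
  simp only [Finset.mem_filter, Finset.mem_univ, true_and] at he ⊢
  exact lt_trans h he

lemma card_topk_le [Fintype C] (k : ℕ) (v : LinearOrder C) : (topk k v).card ≤ k := by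
  letI := v
  have key : ∀ p q : C, v.lt p q →
      ((Finset.univ.filter fun d => v.lt q d).card < (Finset.univ.filter fun d => v.lt p d).card) := by
    intro p q hpq
    apply Finset.card_lt_card
    constructor
    · intro e he
      simp only [Finset.mem_filter, Finset.mem_univ, true_and] at he ⊢
      exact lt_trans hpq he
    · intro hsub
      have hq : q ∈ Finset.univ.filter fun d => v.lt p d := by
        simp only [Finset.mem_filter, Finset.mem_univ, true_and]; exact hpq
      have := hsub hq
      simp only [Finset.mem_filter, Finset.mem_univ, true_and] at this
      exact lt_irrefl q this
  have hle : (topk k v).card ≤ (Finset.range k).card := by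
    apply Finset.card_le_card_of_injOn (fun c => (Finset.univ.filter fun d => v.lt c d).card)
    · intro c hc
      rw [Finset.mem_coe, Finset.mem_range]
      exact mem_topk'.mp hc
    · intro a _ b _ hab
      by_contra hne
      simp only at hab
      rcases lt_or_gt_of_ne hne with h | h
      · exact (Nat.ne_of_gt (key a b h)) hab
      · exact (Nat.ne_of_gt (key b a h)) hab.symm
  simpa using hle

lemma winner_mem_filter [Fintype C] [Nonempty C] [Fintype I] (k : ℕ) (tb : LinearOrder C)
    (V : I → LinearOrder C) :
    winner k tb V ∈ Finset.univ.filter fun x => ∀ y, sck k V y ≤ sck k V x := by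
  unfold winner
  exact @Finset.max'_mem C tb _ _

lemma winner_max [Fintype C] [Nonempty C] [Fintype I] (k : ℕ) (tb : LinearOrder C)
    (V : I → LinearOrder C) (y : C) : sck k V y ≤ sck k V (winner k tb V) :=
  (Finset.mem_filter.mp (winner_mem_filter k tb V)).2 y

lemma le_tb_winner [Fintype C] [Nonempty C] [Fintype I] (k : ℕ) (tb : LinearOrder C)
    (V : I → LinearOrder C) (y : C) (hy : ∀ z, sck k V z ≤ sck k V y) :
    tb.le y (winner k tb V) := by
  unfold winner
  exact @Finset.le_max' C tb _ y (Finset.mem_filter.mpr ⟨Finset.mem_univ y, hy⟩)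

lemma sck_update [Fintype C] [Fintype I] [DecidableEq I] (k : ℕ) (V : I → LinearOrder C)
    (i : I) (v' : LinearOrder C) (c : C) :
    sck k (Function.update V i v') c + (if c ∈ topk k (V i) then 1 else 0)
      = sck k V c + (if c ∈ topk k v' then 1 else 0) := by
  classical
  unfold sck
  rw [Finset.card_filter, Finset.card_filter,
    ← Finset.sum_erase_add _ _ (Finset.mem_univ i),
    ← Finset.sum_erase_add _ _ (Finset.mem_univ i),
    Function.update_self, add_right_comm]
  congr 2
  · apply Finset.sum_congr rfl
    intro j hj
    have hji : j ≠ i := (Finset.mem_erase.mp hj).1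
    rw [Function.update_of_ne hji]
  · by_cases h : c ∈ topk k (V i) <;> simp [h]

/-- Lemma on the two types of manipulative votes under `k`-approval. -/
theorem statement_1 {C I : Type*} [Fintype C] [Nonempty C] [Fintype I] [DecidableEq I]
    (k : ℕ) (hk : 1 ≤ k) (tb : LinearOrder C) (V : I → LinearOrder C)
    (i : I) (x : C) (v' : LinearOrder C)
    (hx : x ≠ winner k tb V)
    (hman : manip k tb V i v')
    (hfav : winner k tb (Function.update V i v') = x) :
    (Xor'
      (x ∉ topk k (V i) ∧ winner k tb V ∉ topk k (V i) ∧ (V i).lt (winner k tb V) x ∧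
        x ∈ topk k v' ∧ winner k tb V ∉ topk k v')
      (x ∈ topk k (V i) ∧ winner k tb V ∈ topk k (V i) ∧ (V i).lt (winner k tb V) x ∧
        x ∈ topk k v' ∧ winner k tb V ∉ topk k v')) ∧
    ((x ∈ topk k (V i) ∧ winner k tb V ∈ topk k (V i) ∧ (V i).lt (winner k tb V) x ∧
        x ∈ topk k v' ∧ winner k tb V ∉ topk k v') → 2 ≤ k) := by
  classical
  have hpref : (V i).lt (winner k tb V) x := by
    have h := hman
    unfold manip at h
    rwa [hfav] at h
  have hup : winner k tb V ∈ topk k (V i) → x ∈ topk k (V i) := fun h => topk_upward hpref h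
  have e1 := sck_update k V i v' x
  have e2 := sck_update k V i v' (winner k tb V)
  have h1 : sck k V x ≤ sck k V (winner k tb V) := winner_max k tb V x
  have hmax' : ∀ z, sck k (Function.update V i v') z ≤ sck k (Function.update V i v') x := by
    intro z
    have h := winner_max k tb (Function.update V i v') z
    rwa [hfav] at h
  have h2 : sck k (Function.update V i v') (winner k tb V)
      ≤ sck k (Function.update V i v') x := hmax' (winner k tb V)
  have h5 : sck k V x < sck k V (winner k tb V) ∨
      sck k (Function.update V i v') (winner k tb V) < sck k (Function.update V i v') x := by
    by_contra hcon
    push_neg at hcon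
    obtain ⟨c1, c2⟩ := hcon
    have e3 : sck k V x = sck k V (winner k tb V) := le_antisymm h1 c1
    have e4 : sck k (Function.update V i v') x = sck k (Function.update V i v') (winner k tb V) :=
      le_antisymm c2 h2
    have t1 : tb.le x (winner k tb V) :=
      le_tb_winner k tb V x (fun z => le_of_le_of_eq (winner_max k tb V z) e3.symm)
    have t2 : tb.le (winner k tb V) x := by
      have h := le_tb_winner k tb (Function.update V i v') (winner k tb V)
        (fun z => le_of_le_of_eq (hmax' z) e4)
      rwa [hfav] at h
    exact hx (tb.le_antisymm x _ t1 t2)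
  have P1 : x ∈ topk k v' := by
    by_contra hA'
    rcases h5 with h5 | h5 <;>
      by_cases hA : x ∈ topk k (V i) <;>
      by_cases hB : winner k tb V ∈ topk k (V i) <;>
      by_cases hB' : winner k tb V ∈ topk k v' <;>
      simp only [hA, hB, hA', hB', if_true, if_false] at e1 e2 <;>
      first
        | omega
        | exact hA (hup hB)
  have P2 : winner k tb V ∉ topk k v' := by
    intro hB'
    rcases h5 with h5 | h5 <;>
      by_cases hA : x ∈ topk k (V i) <;>
      by_cases hB : winner k tb V ∈ topk k (V i) <;>
      simp only [hA, hB, P1, hB', if_true, if_false] at e1 e2 <;>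
      first
        | omega
        | exact hA (hup hB)
  have P3 : x ∈ topk k (V i) ↔ winner k tb V ∈ topk k (V i) := by
    constructor
    · intro hA
      by_contra hB
      rcases h5 with h5 | h5 <;>
        simp only [hA, hB, P1, P2, if_true, if_false] at e1 e2 <;> omega
    · exact hup
  refine ⟨?_, ?_⟩
  · by_cases hA : x ∈ topk k (V i)
    · exact Or.inr ⟨⟨hA, P3.mp hA, hpref, P1, P2⟩, fun h => h.1 hA⟩
    · exact Or.inl ⟨⟨hA, fun hB => hA (P3.mpr hB), hpref, P1, P2⟩, fun h => hA h.1⟩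
  · rintro ⟨hxi, hwi, -, -, -⟩
    have hcard : ({x, winner k tb V} : Finset C).card = 2 := Finset.card_pair hx
    have hsub : ({x, winner k tb V} : Finset C) ⊆ topk k (V i) := by
      intro c hc
      rcases Finset.mem_insert.mp hc with rfl | hc
      · exact hxi
      · rw [Finset.mem_singleton.mp hc]; exact hwi
    have hc1 := Finset.card_le_card hsub
    have hc2 := card_topk_le k (V i)
    omega

end Paper
end

section
/- In the GS-game constructed from the X3C instance (Γ⁰, Σ⁰) as described (4-approval, tie-breaking w > c > p > c_1 > … > c_{3ν} > dummies): if (Γ⁰, Σ⁰) has an exact cover, then z''_0 is a level-2 strategy of voter 0 (no linear order on C weakly dominates z''_0), and z'_0 is not an improving strategy (z'_0 does not weakly dominate z_0). -/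
open scoped Classical

namespace Paper

section Voting

variable {C I : Type*}

/-- The vote `v` ranks the candidates according to the listed blocks: every candidate occurs
in some block, and every candidate of an earlier block is ranked above every candidate of a
later block (the internal order of each block being arbitrary). -/
def FollowsBlocks [Fintype C] (v : LinearOrder C) (L : List (Finset C)) : Prop :=
  (∀ x : C, ∃ B ∈ L, x ∈ B) ∧
  ∀ i j : Fin L.length, (i : ℕ) < (j : ℕ) → ∀ a ∈ L.get i, ∀ b ∈ L.get j, v.lt b a

end Voting

/-- The ground set `Γ` of the modified X3C instance: the three elements `g₁, g₂, g₃` added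
first (`Sum.inl`), the `3ν'` elements of the original ground set `Γ⁰`, and the elements
`x_i, y_i, z_i` for `i = 1, …, ν'+2`.  Altogether `3ν` elements, where `ν = 2ν' + 3`. -/
abbrev GElem (ν' : ℕ) := Fin 3 ⊕ (Fin (3 * ν') ⊕ (Fin (ν' + 2) × Fin 3))

/-- Indices of the sets of the modified collection `Σ`: the `μ₀` original sets, the added set
`{g₁, g₂, g₃}`, the sets `S_i`, and the sets `S'_i`.  Altogether `μ` sets. -/
abbrev SIdx (ν' μ0 : ℕ) := Fin μ0 ⊕ (Unit ⊕ (Fin (ν' + 2) ⊕ Fin (ν' + 2)))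

/-- The element `x_i` (for `t = 0`), `y_i` (for `t = 1`) or `z_i` (for `t = 2`). -/
def xel {ν' : ℕ} (i : Fin (ν' + 2)) (t : Fin 3) : GElem ν' := Sum.inr (Sum.inr (i, t))

/-- The sets of the modified collection `Σ`, given the original collection
`σ0 : Fin μ0 → Finset (Fin (3 * ν'))`. -/
def Gset {ν' μ0 : ℕ} (σ0 : Fin μ0 → Finset (Fin (3 * ν'))) :
    SIdx ν' μ0 → Finset (GElem ν')
  | Sum.inl j => (σ0 j).image fun g => Sum.inr (Sum.inl g)
  | Sum.inr (Sum.inl _) => {Sum.inl 0, Sum.inl 1, Sum.inl 2}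
  | Sum.inr (Sum.inr (Sum.inl i)) => {xel i 0, xel i 1, xel i 2}
  | Sum.inr (Sum.inr (Sum.inr i)) => {xel i 1, xel i 2, xel (i + 1) 0}

/-- The candidates: `w`, `c`, `p`, the candidates `c_g` for ground elements `g` (with
`c_1 = cg (Sum.inl 0)` corresponding to `g₁`), and the dummy candidates: `D_0` (`d none`),
`D_s` for each set index `s` (`d (some s)`), `D_c` (`dc`), `E_j` (`e j`) for `j ∈ [ν+1]`,
and `F_{g,j}` (`f g j`) for `g` a ground element and `j ∈ [ν+1]`; here `ν + 1 = 2ν' + 4`. -/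
inductive Cand (ν' μ0 : ℕ) where
  | w : Cand ν' μ0
  | c : Cand ν' μ0
  | p : Cand ν' μ0
  | cg : GElem ν' → Cand ν' μ0
  | d : Option (SIdx ν' μ0) → Fin 4 → Cand ν' μ0
  | dc : Fin 3 → Cand ν' μ0
  | e : Fin (2 * ν' + 4) → Fin 2 → Cand ν' μ0
  | f : GElem ν' → Fin (2 * ν' + 4) → Fin 3 → Cand ν' μ0
  deriving DecidableEq, Fintype

instance (ν' μ0 : ℕ) : Nonempty (Cand ν' μ0) := ⟨Cand.w⟩

/-- The voters: voter `0` (the level-2 voter), the `μ` GS-manipulators `man s` (voter `z_s`),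
the voter `u`, the `ν+1` voters `u_j`, and the voters `u_{g,j}` for each ground element `g`
and `j ∈ [ν+1]`. -/
inductive Voter (ν' μ0 : ℕ) where
  | v0 : Voter ν' μ0
  | man : SIdx ν' μ0 → Voter ν' μ0
  | u : Voter ν' μ0
  | uj : Fin (2 * ν' + 4) → Voter ν' μ0
  | uij : GElem ν' → Fin (2 * ν' + 4) → Voter ν' μ0
  deriving DecidableEq, Fintype

variable (ν' μ0 : ℕ)

/-- The block of dummy candidates `D_0` (belonging to voter 0). -/
def D0set : Finset (Cand ν' μ0) := Finset.univ.image (Cand.d none)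

/-- The block of dummy candidates `D_s` (belonging to the manipulator `s`). -/
def Dset (s : SIdx ν' μ0) : Finset (Cand ν' μ0) := Finset.univ.image (Cand.d (some s))

/-- The set of candidates `C_s = {c_g : g ∈ σ_s}`. -/
def Cset (σ0 : Fin μ0 → Finset (Fin (3 * ν'))) (s : SIdx ν' μ0) : Finset (Cand ν' μ0) :=
  (Gset σ0 s).image Cand.cg

/-- The block of dummy candidates `D_c`. -/
def Dcset : Finset (Cand ν' μ0) := Finset.univ.image Cand.dc

/-- The block of dummy candidates `E_j`. -/
def Eset (j : Fin (2 * ν' + 4)) : Finset (Cand ν' μ0) := Finset.univ.image (Cand.e j)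

/-- The block of dummy candidates `F_{g,j}`. -/
def Fset (g : GElem ν') (j : Fin (2 * ν' + 4)) : Finset (Cand ν' μ0) :=
  Finset.univ.image (Cand.f g j)

/-- The set `C' = {c_1, …, c_{3ν}}` of all ground-element candidates. -/
def Cpset : Finset (Cand ν' μ0) := Finset.univ.image Cand.cg

variable {ν' μ0}

/-- The profile resulting when voter 0 casts `s0`, each GS-manipulator `man s` casts either
his truthful vote `V (man s)` (if `a s = false`) or his manipulative vote `zp s`
(if `a s = true`), and all other voters vote truthfully. -/
noncomputable def play (V : Voter ν' μ0 → LinearOrder (Cand ν' μ0))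
    (zp : SIdx ν' μ0 → LinearOrder (Cand ν' μ0)) (s0 : LinearOrder (Cand ν' μ0))
    (a : SIdx ν' μ0 → Bool) : Voter ν' μ0 → LinearOrder (Cand ν' μ0)
  | Voter.v0 => s0
  | Voter.man s => if a s then zp s else V (Voter.man s)
  | i => V i

/-- The voter-0 strategy `s` weakly dominates the strategy `s'` in the GS-game: for every
choice of actions of the GS-manipulators the outcome of `s` is ranked by voter 0's sincere
vote at least as high as the outcome of `s'`, and strictly higher for some choice. -/
noncomputable def WD (tb : LinearOrder (Cand ν' μ0))
    (V : Voter ν' μ0 → LinearOrder (Cand ν' μ0))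
    (zp : SIdx ν' μ0 → LinearOrder (Cand ν' μ0))
    (s s' : LinearOrder (Cand ν' μ0)) : Prop :=
  (∀ a : SIdx ν' μ0 → Bool,
    winner 4 tb (play V zp s a) = winner 4 tb (play V zp s' a) ∨
    (V Voter.v0).lt (winner 4 tb (play V zp s' a)) (winner 4 tb (play V zp s a))) ∧
  ∃ a : SIdx ν' μ0 → Bool,
    (V Voter.v0).lt (winner 4 tb (play V zp s' a)) (winner 4 tb (play V zp s a))

section MyAux

variable {C : Type*} [Fintype C]

lemma mem_foldr_union [DecidableEq C] (L : List (Finset C)) (x : C) :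
    x ∈ L.foldr (· ∪ ·) ∅ ↔ ∃ B ∈ L, x ∈ B := by
  induction L with
  | nil => simp
  | cons B L ih => simp [ih]

lemma lin_asymm (v : LinearOrder C) {a b : C} (h : v.lt a b) : ¬ v.lt b a :=
  @lt_asymm C v.toPartialOrder.toPreorder a b h

lemma lin_irrefl (v : LinearOrder C) (a : C) : ¬ v.lt a a :=
  @lt_irrefl C v.toPartialOrder.toPreorder a

lemma topk_eq_of_blocks (v : LinearOrder C) (k : ℕ) (L1 L2 : List (Finset C))
    (h : FollowsBlocks v (L1 ++ L2)) (U : Finset C)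
    (hU : ∀ x, x ∈ U ↔ ∃ B ∈ L1, x ∈ B) (hk : U.card = k) :
    topk k v = U := by
  ext x
  simp only [topk, Finset.mem_filter, Finset.mem_univ, true_and]
  constructor
  · intro hx
    by_contra hxU
    obtain ⟨B, hBL, hxB⟩ := h.1 x
    obtain ⟨j, hj⟩ := List.mem_iff_get.mp hBL
    have hjlen : L1.length ≤ (j : ℕ) := by
      by_contra hlt
      push_neg at hlt
      apply hxU
      rw [hU]
      refine ⟨L1.get ⟨j, hlt⟩, List.get_mem _ _, ?_⟩
      have he : (L1 ++ L2).get j = L1.get ⟨j, hlt⟩ := by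
        rw [List.get_eq_getElem, List.get_eq_getElem]
        exact List.getElem_append_left hlt
      rw [← he, hj]; exact hxB
    have hsub : U ⊆ Finset.univ.filter fun d => v.lt x d := by
      intro u hu
      rw [hU] at hu
      obtain ⟨B', hB', huB'⟩ := hu
      obtain ⟨i, hi⟩ := List.mem_iff_get.mp hB'
      have hil : (i : ℕ) < (L1 ++ L2).length := by
        have := i.isLt; simp; omega
      have he : (L1 ++ L2).get ⟨i, hil⟩ = L1.get i := by
        rw [List.get_eq_getElem, List.get_eq_getElem]
        exact List.getElem_append_left i.isLt
      have := h.2 ⟨i, hil⟩ j (lt_of_lt_of_le i.isLt hjlen) u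
        (by rw [he, hi]; exact huB') x (by rw [hj]; exact hxB)
      simp only [Finset.mem_filter, Finset.mem_univ, true_and]
      exact this
    have := Finset.card_le_card hsub
    omega
  · intro hxU
    obtain ⟨B, hB, hxB⟩ := (hU x).mp hxU
    obtain ⟨i, hi⟩ := List.mem_iff_get.mp hB
    have hil : (i : ℕ) < (L1 ++ L2).length := by
      have := i.isLt; simp; omega
    have hgi : (L1 ++ L2).get ⟨i, hil⟩ = L1.get i := by
      rw [List.get_eq_getElem, List.get_eq_getElem]
      exact List.getElem_append_left i.isLt
    have hsub : (Finset.univ.filter fun d => v.lt x d) ⊆ U.erase x := by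
      intro u hu
      rw [Finset.mem_filter] at hu
      have hlt := hu.2
      obtain ⟨B', hB'L, huB'⟩ := h.1 u
      obtain ⟨j, hj⟩ := List.mem_iff_get.mp hB'L
      have hjlen : (j : ℕ) < L1.length := by
        by_contra hge
        push_neg at hge
        have hij : ((⟨i, hil⟩ : Fin (L1 ++ L2).length) : ℕ) < (j : ℕ) :=
          lt_of_lt_of_le i.isLt hge
        have := h.2 ⟨i, hil⟩ j hij x (by rw [hgi, hi]; exact hxB) u (by rw [hj]; exact huB')
        exact lin_asymm v hlt this
      refine Finset.mem_erase.mpr ⟨?_, ?_⟩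
      · rintro rfl; exact lin_irrefl v _ hlt
      · rw [hU]
        refine ⟨L1.get ⟨j, hjlen⟩, List.get_mem _ _, ?_⟩
        have he : (L1 ++ L2).get j = L1.get ⟨j, hjlen⟩ := by
          rw [List.get_eq_getElem, List.get_eq_getElem]
          exact List.getElem_append_left hjlen
        rw [← he, hj]; exact huB'
    have h1 := Finset.card_le_card hsub
    have h2 : (U.erase x).card = k - 1 := by
      rw [Finset.card_erase_of_mem hxU, hk]
    have hkpos : 0 < k := by
      rw [← hk]; exact Finset.card_pos.mpr ⟨x, hxU⟩
    omega

lemma max'_eq_of (tb : LinearOrder C) (S : Finset C) (h : S.Nonempty) (X : C)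
    (hX : X ∈ S) (hall : ∀ y ∈ S, tb.le y X) : @Finset.max' C tb S h = X :=
  @le_antisymm C tb.toPartialOrder _ _ (hall _ (@Finset.max'_mem C tb S h))
    (@Finset.le_max' C tb S X hX)

variable {I : Type*} [Nonempty C] [Fintype I]

lemma winner_eq_of (k : ℕ) (tb : LinearOrder C) (P : I → LinearOrder C) (X : C)
    (hmax : ∀ y, sck k P y ≤ sck k P X)
    (htie : ∀ y, sck k P y = sck k P X → tb.le y X) :
    winner k tb P = X := by
  unfold winner
  apply max'_eq_of
  · simp only [Finset.mem_filter, Finset.mem_univ, true_and]; exact hmax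
  · intro y hy
    simp only [Finset.mem_filter, Finset.mem_univ, true_and] at hy
    exact htie y (le_antisymm (hmax y) (hy X))

lemma winner_le_sck (k : ℕ) (tb : LinearOrder C) (P : I → LinearOrder C) (y : C) :
    sck k P y ≤ sck k P (winner k tb P) := by
  have h : winner k tb P ∈ Finset.univ.filter (fun x => ∀ y, sck k P y ≤ sck k P x) :=
    Finset.max'_mem _ _
  simp only [Finset.mem_filter] at h
  exact h.2 y

lemma winner_congr (k : ℕ) (tb : LinearOrder C) (P1 P2 : I → LinearOrder C)
    (h : ∀ x, (∀ y, sck k P1 y ≤ sck k P1 x) ↔ (∀ y, sck k P2 y ≤ sck k P2 x)) :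
    winner k tb P1 = winner k tb P2 := by
  have hs : (Finset.univ.filter fun x => ∀ y, sck k P1 y ≤ sck k P1 x) =
      (Finset.univ.filter fun x => ∀ y, sck k P2 y ≤ sck k P2 x) := by
    ext x; simp only [Finset.mem_filter, Finset.mem_univ, true_and]; exact h x
  have m1 : winner k tb P1 ∈ (Finset.univ.filter fun x => ∀ y, sck k P1 y ≤ sck k P1 x) :=
    Finset.max'_mem _ _
  have m2 : winner k tb P2 ∈ (Finset.univ.filter fun x => ∀ y, sck k P2 y ≤ sck k P2 x) :=
    Finset.max'_mem _ _
  apply @le_antisymm C tb.toPartialOrder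
  · exact @Finset.le_max' C tb _ _ (hs ▸ m1)
  · exact @Finset.le_max' C tb _ _ (hs.symm ▸ m2)

lemma sck_le_of (k : ℕ) (P : I → LinearOrder C) (y : C) (S : Finset I)
    (h : ∀ i, y ∈ topk k (P i) → i ∈ S) : sck k P y ≤ S.card := by
  apply Finset.card_le_card
  intro i hi
  rw [Finset.mem_filter] at hi
  exact h i hi.2

lemma le_sck_of (k : ℕ) (P : I → LinearOrder C) (y : C) (S : Finset I)
    (h : ∀ i ∈ S, y ∈ topk k (P i)) : S.card ≤ sck k P y := by
  apply Finset.card_le_card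
  intro i hi
  rw [Finset.mem_filter]
  exact ⟨Finset.mem_univ _, h i hi⟩

lemma sck_eq_of (k : ℕ) (P : I → LinearOrder C) (y : C) (S : Finset I)
    (h : ∀ i, y ∈ topk k (P i) ↔ i ∈ S) : sck k P y = S.card := by
  unfold sck
  congr 1
  ext i
  rw [Finset.mem_filter]
  simp [h i]

lemma sck_congr (k : ℕ) (P1 P2 : I → LinearOrder C) (y : C)
    (h : ∀ i, y ∈ topk k (P1 i) ↔ y ∈ topk k (P2 i)) : sck k P1 y = sck k P2 y := by
  unfold sck
  congr 1
  ext i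
  rw [Finset.mem_filter, Finset.mem_filter]
  simp [h i]

end MyAux

/-- main (non-dummy) candidates -/
def IsMain {ν' μ0 : ℕ} : Cand ν' μ0 → Prop
  | .w => True
  | .c => True
  | .p => True
  | .cg _ => True
  | _ => False

/-- owner of a dummy candidate -/
def owner {ν' μ0 : ℕ} : Cand ν' μ0 → Voter ν' μ0
  | .d (some s) _ => .man s
  | .dc _ => .u
  | .e j _ => .uj j
  | .f g j _ => .uij g j
  | _ => .v0

/-- if the original X3C instance has an exact cover, then in the
constructed GS-game `z''_0` is a level-2 strategy of voter 0, and `z'_0` is not an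
improving strategy. -/
theorem statement_13
    (ν' μ0 : ℕ)
    (σ0 : Fin μ0 → Finset (Fin (3 * ν')))
    (hσ0 : ∀ j, (σ0 j).card = 3)
    (tb : LinearOrder (Cand ν' μ0))
    (htb1 : tb.lt Cand.c Cand.w)
    (htb2 : tb.lt Cand.p Cand.c)
    (htb3 : ∀ g, tb.lt (Cand.cg g) Cand.p)
    (htb4 : ∀ t t' : Fin 3, t < t' → tb.lt (Cand.cg (Sum.inl t')) (Cand.cg (Sum.inl t)))
    (htb5 : ∀ (t : Fin 3) (g : Fin (3 * ν') ⊕ (Fin (ν' + 2) × Fin 3)),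
      tb.lt (Cand.cg (Sum.inr g)) (Cand.cg (Sum.inl t)))
    (htb6 : ∀ x : Cand ν' μ0, x ∉ ({Cand.w, Cand.c, Cand.p} ∪ Cpset ν' μ0) →
      ∀ g, tb.lt x (Cand.cg g))
    (V : Voter ν' μ0 → LinearOrder (Cand ν' μ0))
    (hz0 : FollowsBlocks (V Voter.v0)
      [D0set ν' μ0, {Cand.p}, {Cand.cg (Sum.inl 0)}, {Cand.c},
       Cpset ν' μ0 \ {Cand.cg (Sum.inl 0)},
       Finset.univ \ (D0set ν' μ0 ∪ Cpset ν' μ0 ∪ {Cand.p, Cand.c})])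
    (hzman : ∀ s, FollowsBlocks (V (Voter.man s))
      [Dset ν' μ0 s, Cset ν' μ0 σ0 s, {Cand.c},
       Finset.univ \ (Dset ν' μ0 s ∪ Cset ν' μ0 σ0 s ∪ {Cand.c})])
    (hcons : ∀ s, ∀ a ∈ Cset ν' μ0 σ0 s, ∀ b ∈ Cset ν' μ0 σ0 s,
      tb.lt a b → (V (Voter.man s)).lt a b)
    (hu : FollowsBlocks (V Voter.u)
      [{Cand.c}, Dcset ν' μ0, {Cand.w},
       Finset.univ \ (Dcset ν' μ0 ∪ {Cand.c, Cand.w})])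
    (huj : ∀ j, FollowsBlocks (V (Voter.uj j))
      [{Cand.w}, {Cand.p}, Eset ν' μ0 j,
       Finset.univ \ (Eset ν' μ0 j ∪ {Cand.w, Cand.p})])
    (huij : ∀ g j, FollowsBlocks (V (Voter.uij g j))
      [{Cand.cg g}, Fset ν' μ0 g j, {Cand.w},
       Finset.univ \ (Fset ν' μ0 g j ∪ {Cand.cg g, Cand.w})])
    (zp : SIdx ν' μ0 → LinearOrder (Cand ν' μ0))
    (hzp : ∀ s, topk 4 (zp s) = Cset ν' μ0 σ0 s ∪ {Cand.c})
    (dd dd' : Fin 4) (hdd : dd ≠ dd')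
    (z0' z0'' : LinearOrder (Cand ν' μ0))
    (hz0' : topk 4 z0' = (D0set ν' μ0 \ {Cand.d none dd, Cand.d none dd'}) ∪ {Cand.p, Cand.c})
    (hz0'' : topk 4 z0'' = (D0set ν' μ0 \ {Cand.d none dd}) ∪ {Cand.p})
    (hcover : ∃ T : Finset (Fin μ0), T.card = ν' ∧ T.biUnion σ0 = Finset.univ)
    :
    (∀ s : LinearOrder (Cand ν' μ0), ¬ WD tb V zp s z0'') ∧
    ¬ WD tb V zp z0' (V Voter.v0) := by
  obtain ⟨T, hTcard, hTcov⟩ := hcover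
  -- injectivity of candidate constructors
  have injd : ∀ o : Option (SIdx ν' μ0), Function.Injective (Cand.d o) := by
    intro o a b h; injection h
  have injcg : Function.Injective (Cand.cg (ν' := ν') (μ0 := μ0)) := by
    intro a b h; injection h
  have injdc : Function.Injective (Cand.dc (ν' := ν') (μ0 := μ0)) := by
    intro a b h; injection h
  have inje : ∀ j, Function.Injective (Cand.e (ν' := ν') (μ0 := μ0) j) := by
    intro j a b h; injection h
  have injf : ∀ g j, Function.Injective (Cand.f (ν' := ν') (μ0 := μ0) g j) := by
    intro g j a b h; injection h
  have injuj : Function.Injective (Voter.uj (ν' := ν') (μ0 := μ0)) := by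
    intro a b h; injection h
  have injman : Function.Injective (Voter.man (ν' := ν') (μ0 := μ0)) := by
    intro a b h; injection h
  have injuij : ∀ g, Function.Injective (Voter.uij (ν' := ν') (μ0 := μ0) g) := by
    intro g a b h; injection h
  -- cardinalities of the dummy blocks
  have hcD0 : (D0set ν' μ0).card = 4 := by
    simp [D0set, Finset.card_image_of_injective _ (injd none)]
  have hcDs : ∀ s, (Dset ν' μ0 s).card = 4 := by
    intro s; simp [Dset, Finset.card_image_of_injective _ (injd (some s))]
  have hcDc : (Dcset ν' μ0).card = 3 := by
    simp [Dcset, Finset.card_image_of_injective _ injdc]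
  have hcE : ∀ j, (Eset ν' μ0 j).card = 2 := by
    intro j; simp [Eset, Finset.card_image_of_injective _ (inje j)]
  have hcF : ∀ g j, (Fset ν' μ0 g j).card = 3 := by
    intro g j; simp [Fset, Finset.card_image_of_injective _ (injf g j)]
  -- top-4 sets of the truthful votes
  have ht0 : topk 4 (V Voter.v0) = D0set ν' μ0 := by
    exact topk_eq_of_blocks (V Voter.v0) 4 [D0set ν' μ0]
      [{Cand.p}, {Cand.cg (Sum.inl 0)}, {Cand.c}, Cpset ν' μ0 \ {Cand.cg (Sum.inl 0)},
       Finset.univ \ (D0set ν' μ0 ∪ Cpset ν' μ0 ∪ {Cand.p, Cand.c})] hz0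
      (D0set ν' μ0) (by intro x; simp) hcD0
  have htman : ∀ s, topk 4 (V (Voter.man s)) = Dset ν' μ0 s := by
    intro s
    exact topk_eq_of_blocks (V (Voter.man s)) 4 [Dset ν' μ0 s]
      [Cset ν' μ0 σ0 s, {Cand.c},
       Finset.univ \ (Dset ν' μ0 s ∪ Cset ν' μ0 σ0 s ∪ {Cand.c})] (hzman s)
      (Dset ν' μ0 s) (by intro x; simp) (hcDs s)
  have htu : topk 4 (V Voter.u) = {Cand.c} ∪ Dcset ν' μ0 := by
    refine topk_eq_of_blocks (V Voter.u) 4 [{Cand.c}, Dcset ν' μ0]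
      [{Cand.w}, Finset.univ \ (Dcset ν' μ0 ∪ {Cand.c, Cand.w})] hu
      ({Cand.c} ∪ Dcset ν' μ0) (by intro x; simp) ?_
    rw [← Finset.insert_eq, Finset.card_insert_of_notMem (by simp [Dcset]), hcDc]
  have htuj : ∀ j, topk 4 (V (Voter.uj j)) = {Cand.w} ∪ ({Cand.p} ∪ Eset ν' μ0 j) := by
    intro j
    refine topk_eq_of_blocks (V (Voter.uj j)) 4 [{Cand.w}, {Cand.p}, Eset ν' μ0 j]
      [Finset.univ \ (Eset ν' μ0 j ∪ {Cand.w, Cand.p})] (huj j)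
      ({Cand.w} ∪ ({Cand.p} ∪ Eset ν' μ0 j)) (by intro x; simp; tauto) ?_
    rw [← Finset.insert_eq, ← Finset.insert_eq,
      Finset.card_insert_of_notMem (by simp [Eset]),
      Finset.card_insert_of_notMem (by simp [Eset]), hcE]
  have htuij : ∀ g j, topk 4 (V (Voter.uij g j)) = {Cand.cg g} ∪ Fset ν' μ0 g j := by
    intro g j
    refine topk_eq_of_blocks (V (Voter.uij g j)) 4 [{Cand.cg g}, Fset ν' μ0 g j]
      [{Cand.w}, Finset.univ \ (Fset ν' μ0 g j ∪ {Cand.cg g, Cand.w})] (huij g j)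
      ({Cand.cg g} ∪ Fset ν' μ0 g j) (by intro x; simp) ?_
    rw [← Finset.insert_eq, Finset.card_insert_of_notMem (by simp [Fset]), hcF]
    -- the exact cover
  have hexists : ∀ γ : Fin (3*ν'), ∃ j, j ∈ T ∧ γ ∈ σ0 j := by
    intro γ
    have : γ ∈ T.biUnion σ0 := by rw [hTcov]; exact Finset.mem_univ γ
    simpa [Finset.mem_biUnion] using this
  have huniqT : ∀ (γ : Fin (3*ν')) j j', j ∈ T → j' ∈ T → γ ∈ σ0 j → γ ∈ σ0 j' → j = j' := by
    intro γ j j' hj hj' hγj hγj'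
    by_contra hne
    have hsub : (Finset.univ : Finset (Fin (3*ν'))) ⊆
        ((T.erase j').biUnion σ0) ∪ (σ0 j' \ {γ}) := by
      intro x _
      have hx : x ∈ T.biUnion σ0 := by rw [hTcov]; exact Finset.mem_univ x
      rw [Finset.mem_biUnion] at hx
      obtain ⟨i, hi, hxi⟩ := hx
      rcases eq_or_ne i j' with rfl | hij
      · rcases eq_or_ne x γ with rfl | hxγ
        · exact Finset.mem_union_left _
            (Finset.mem_biUnion.mpr ⟨j, Finset.mem_erase.mpr ⟨hne, hj⟩, hγj⟩)
        · exact Finset.mem_union_right _ (Finset.mem_sdiff.mpr ⟨hxi, by simp [hxγ]⟩)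
      · exact Finset.mem_union_left _
          (Finset.mem_biUnion.mpr ⟨i, Finset.mem_erase.mpr ⟨hij, hi⟩, hxi⟩)
    have hc1 : ((T.erase j').biUnion σ0).card ≤ 3 * (ν' - 1) := by
      calc ((T.erase j').biUnion σ0).card ≤ ∑ i ∈ T.erase j', (σ0 i).card :=
            Finset.card_biUnion_le
        _ = 3 * (ν' - 1) := by
            rw [Finset.sum_congr rfl (fun i _ => hσ0 i), Finset.sum_const, smul_eq_mul,
              Finset.card_erase_of_mem hj', hTcard]
            ring
    have hc2 : (σ0 j' \ {γ}).card = 2 := by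
      rw [Finset.card_sdiff_of_subset (by simpa using hγj'), hσ0 j', Finset.card_singleton]
    have hcu : (Finset.univ : Finset (Fin (3*ν'))).card = 3*ν' := by simp
    have hle := Finset.card_le_card hsub
    have hun := Finset.card_union_le ((T.erase j').biUnion σ0) (σ0 j' \ {γ})
    have hν : 1 ≤ ν' := by have := γ.isLt; all_goals omega
    omega
  set jf : Fin (3*ν') → Fin μ0 := fun γ => (hexists γ).choose with hjf_def
  have hjf : ∀ γ, jf γ ∈ T ∧ γ ∈ σ0 (jf γ) := fun γ => (hexists γ).choose_spec
  set cover : SIdx ν' μ0 → Bool := fun s =>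
    match s with
    | Sum.inl j => decide (j ∈ T)
    | Sum.inr (Sum.inl _) => true
    | Sum.inr (Sum.inr (Sum.inl _)) => true
    | Sum.inr (Sum.inr (Sum.inr _)) => false
    with hcover_def
  set sg : GElem ν' → SIdx ν' μ0 := fun g =>
    match g with
    | Sum.inl _ => Sum.inr (Sum.inl ())
    | Sum.inr (Sum.inl γ) => Sum.inl (jf γ)
    | Sum.inr (Sum.inr (i, _)) => Sum.inr (Sum.inr (Sum.inl i))
    with hsg_def
  have hcov_sg : ∀ g : GElem ν', cover (sg g) = true := by
    rintro (t | (γ | ⟨i, t⟩)) <;> simp [hcover_def, hsg_def, (hjf _).1]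
  have hg_sg : ∀ g : GElem ν', g ∈ Gset σ0 (sg g) := by
    rintro (t | (γ | ⟨i, t⟩))
    · fin_cases t <;> simp [hsg_def, Gset]
    · simp only [hsg_def, Gset, Finset.mem_image]
      exact ⟨γ, (hjf γ).2, rfl⟩
    · fin_cases t <;> simp [hsg_def, Gset, xel]
  have hsg_uniq : ∀ (g : GElem ν') s, cover s = true → g ∈ Gset σ0 s → s = sg g := by
    rintro g (j | (u | (i | i))) hc hm
    · simp only [Gset, Finset.mem_image] at hm
      obtain ⟨γ, hγ, rfl⟩ := hm
      have hjT : j ∈ T := by simpa [hcover_def] using hc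
      simp only [hsg_def]
      exact congrArg Sum.inl (huniqT γ j (jf γ) hjT (hjf γ).1 hγ (hjf γ).2)
    · rcases u
      simp only [Gset, Finset.mem_insert, Finset.mem_singleton] at hm
      rcases hm with rfl | rfl | rfl <;> simp [hsg_def]
    · simp only [Gset, Finset.mem_insert, Finset.mem_singleton, xel] at hm
      rcases hm with rfl | rfl | rfl <;> simp [hsg_def]
    · simp [hcover_def] at hc
  have hMcov : (Finset.univ.filter fun s : SIdx ν' μ0 => cover s = true).card = 2*ν' + 3 := by
    have hset : (Finset.univ.filter fun s : SIdx ν' μ0 => cover s = true) =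
        (T.image Sum.inl ∪ ({Sum.inr (Sum.inl ())} ∪
          Finset.univ.image (fun i : Fin (ν'+2) => Sum.inr (Sum.inr (Sum.inl i))))) := by
      ext s
      rcases s with j | (u | (i | i)) <;> simp [hcover_def]
    rw [hset, Finset.card_union_of_disjoint (by simp [Finset.disjoint_left]),
      Finset.card_union_of_disjoint (by simp [Finset.disjoint_left]),
      Finset.card_image_of_injective _ Sum.inl_injective, hTcard, Finset.card_singleton,
      Finset.card_image_of_injective _ (fun a b h => by simpa using h)]
    simp
    omega
  -- dummies never get more than 2 points
  have hdummy : ∀ (s0 : LinearOrder (Cand ν' μ0)) (a : SIdx ν' μ0 → Bool) (y : Cand ν' μ0),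
      ¬ IsMain y → sck 4 (play V zp s0 a) y ≤ 2 := by
    intro s0 a y hy
    have h2 : ({Voter.v0, owner y} : Finset (Voter ν' μ0)).card ≤ 2 :=
      le_trans (Finset.card_insert_le _ _) (by simp)
    refine le_trans (sck_le_of 4 _ y {Voter.v0, owner y} ?_) h2
    intro i hmem
    rcases i with _ | s | _ | j | ⟨g, j⟩
    · simp
    · rcases ha : a s with _ | _
      · rw [show play V zp s0 a (Voter.man s) = V (Voter.man s) by simp [play, ha],
          htman s] at hmem
        simp only [Dset, Finset.mem_image] at hmem
        obtain ⟨kk, -, rfl⟩ := hmem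
        simp [owner]
      · rw [show play V zp s0 a (Voter.man s) = zp s by simp [play, ha], hzp s] at hmem
        simp only [Cset, Finset.mem_union, Finset.mem_image, Finset.mem_singleton] at hmem
        rcases hmem with ⟨g', -, rfl⟩ | rfl
        · exact absurd trivial hy
        · exact absurd trivial hy
    · rw [show play V zp s0 a Voter.u = V Voter.u from rfl, htu] at hmem
      simp only [Finset.mem_union, Finset.mem_singleton, Dcset, Finset.mem_image] at hmem
      rcases hmem with rfl | ⟨kk, -, rfl⟩
      · exact absurd trivial hy
      · simp [owner]
    · rw [show play V zp s0 a (Voter.uj j) = V (Voter.uj j) from rfl, htuj j] at hmem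
      simp only [Finset.mem_union, Finset.mem_singleton, Eset, Finset.mem_image] at hmem
      rcases hmem with rfl | rfl | ⟨kk, -, rfl⟩
      · exact absurd trivial hy
      · exact absurd trivial hy
      · simp [owner]
    · rw [show play V zp s0 a (Voter.uij g j) = V (Voter.uij g j) from rfl, htuij g j] at hmem
      simp only [Finset.mem_union, Finset.mem_singleton, Fset, Finset.mem_image] at hmem
      rcases hmem with rfl | ⟨kk, -, rfl⟩
      · exact absurd trivial hy
      · simp [owner]
  -- w always gets at least 4 points
  have hw4 : ∀ (s0 : LinearOrder (Cand ν' μ0)) (a : SIdx ν' μ0 → Bool),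
      4 ≤ sck 4 (play V zp s0 a) Cand.w := by
    intro s0 a
    have hcard : ({Voter.uj ⟨0, by omega⟩, Voter.uj ⟨1, by omega⟩, Voter.uj ⟨2, by omega⟩,
        Voter.uj ⟨3, by omega⟩} : Finset (Voter ν' μ0)).card = 4 := by
      rw [Finset.card_insert_of_notMem (by simp [Fin.ext_iff]), Finset.card_insert_of_notMem (by simp [Fin.ext_iff]),
        Finset.card_insert_of_notMem (by simp [Fin.ext_iff]), Finset.card_singleton]
    refine le_trans (le_of_eq hcard.symm) (le_sck_of 4 _ _ _ ?_)
    intro i hi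
    simp only [Finset.mem_insert, Finset.mem_singleton] at hi
    rcases hi with rfl | rfl | rfl | rfl <;>
      · rw [show play V zp s0 a (Voter.uj _) = V (Voter.uj _) from rfl, htuj]
        simp
    -- generic score computation at the cover profile
  have hscore : ∀ (s0 : LinearOrder (Cand ν' μ0)) (X : Cand ν' μ0)
      (base : Finset (Voter ν' μ0)), Voter.v0 ∉ base →
      (∀ i, i ≠ Voter.v0 → (X ∈ topk 4 (play V zp s0 cover i) ↔ i ∈ base)) →
      sck 4 (play V zp s0 cover) X = base.card + (if X ∈ topk 4 s0 then 1 else 0) := by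
    intro s0 X base hv0 hchar
    by_cases hX : X ∈ topk 4 s0
    · refine (sck_eq_of 4 _ X (insert Voter.v0 base) ?_).trans ?_
      · intro i
        rcases eq_or_ne i Voter.v0 with rfl | hne
        · constructor
          · intro _; exact Finset.mem_insert_self _ _
          · intro _
            show X ∈ topk 4 (play V zp s0 cover Voter.v0)
            exact hX
        · rw [hchar i hne]
          simp [Finset.mem_insert, hne]
      · rw [Finset.card_insert_of_notMem hv0, if_pos hX]
    · refine (sck_eq_of 4 _ X base ?_).trans ?_
      · intro i
        rcases eq_or_ne i Voter.v0 with rfl | hne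
        · constructor
          · intro h; exact absurd h hX
          · intro h; exact absurd h hv0
        · exact hchar i hne
      · rw [if_neg hX]
        exact (Nat.add_zero _).symm
  -- score of w
  have sc_w : ∀ s0, sck 4 (play V zp s0 cover) Cand.w
      = (2*ν'+4) + (if Cand.w ∈ topk 4 s0 then 1 else 0) := by
    intro s0
    have hchar : ∀ i, i ≠ Voter.v0 →
        (Cand.w ∈ topk 4 (play V zp s0 cover i) ↔ i ∈ Finset.univ.image Voter.uj) := by
      intro i hne
      rcases i with _ | s | _ | j | ⟨g, j⟩
      · exact absurd rfl hne
      · rcases ha : cover s with _ | _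
        · rw [show play V zp s0 cover (Voter.man s) = V (Voter.man s) by simp [play, ha],
            htman s]
          simp [Dset]
        · rw [show play V zp s0 cover (Voter.man s) = zp s by simp [play, ha], hzp s]
          simp [Cset]
      · rw [show play V zp s0 cover Voter.u = V Voter.u from rfl, htu]
        simp [Dcset]
      · rw [show play V zp s0 cover (Voter.uj j) = V (Voter.uj j) from rfl, htuj j]
        simp
      · rw [show play V zp s0 cover (Voter.uij g j) = V (Voter.uij g j) from rfl, htuij g j]
        simp [Fset]
    rw [hscore s0 Cand.w _ (by simp) hchar, Finset.card_image_of_injective _ injuj]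
    simp
  -- score of p
  have sc_p : ∀ s0, sck 4 (play V zp s0 cover) Cand.p
      = (2*ν'+4) + (if Cand.p ∈ topk 4 s0 then 1 else 0) := by
    intro s0
    have hchar : ∀ i, i ≠ Voter.v0 →
        (Cand.p ∈ topk 4 (play V zp s0 cover i) ↔ i ∈ Finset.univ.image Voter.uj) := by
      intro i hne
      rcases i with _ | s | _ | j | ⟨g, j⟩
      · exact absurd rfl hne
      · rcases ha : cover s with _ | _
        · rw [show play V zp s0 cover (Voter.man s) = V (Voter.man s) by simp [play, ha],
            htman s]
          simp [Dset]
        · rw [show play V zp s0 cover (Voter.man s) = zp s by simp [play, ha], hzp s]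
          simp [Cset]
      · rw [show play V zp s0 cover Voter.u = V Voter.u from rfl, htu]
        simp [Dcset]
      · rw [show play V zp s0 cover (Voter.uj j) = V (Voter.uj j) from rfl, htuj j]
        simp
      · rw [show play V zp s0 cover (Voter.uij g j) = V (Voter.uij g j) from rfl, htuij g j]
        simp [Fset]
    rw [hscore s0 Cand.p _ (by simp) hchar, Finset.card_image_of_injective _ injuj]
    simp
  -- score of c
  have sc_c : ∀ s0, sck 4 (play V zp s0 cover) Cand.c
      = (2*ν'+4) + (if Cand.c ∈ topk 4 s0 then 1 else 0) := by
    intro s0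
    have hchar : ∀ i, i ≠ Voter.v0 →
        (Cand.c ∈ topk 4 (play V zp s0 cover i) ↔ i ∈ insert Voter.u
          ((Finset.univ.filter fun s : SIdx ν' μ0 => cover s = true).image Voter.man)) := by
      intro i hne
      rcases i with _ | s | _ | j | ⟨g, j⟩
      · exact absurd rfl hne
      · rcases ha : cover s with _ | _
        · rw [show play V zp s0 cover (Voter.man s) = V (Voter.man s) by simp [play, ha],
            htman s]
          simp [Dset, ha]
        · rw [show play V zp s0 cover (Voter.man s) = zp s by simp [play, ha], hzp s]
          simp [Cset, ha]
      · rw [show play V zp s0 cover Voter.u = V Voter.u from rfl, htu]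
        simp
      · rw [show play V zp s0 cover (Voter.uj j) = V (Voter.uj j) from rfl, htuj j]
        simp [Eset]
      · rw [show play V zp s0 cover (Voter.uij g j) = V (Voter.uij g j) from rfl, htuij g j]
        simp [Fset]
    rw [hscore s0 Cand.c _ (by simp) hchar, Finset.card_insert_of_notMem (by simp),
      Finset.card_image_of_injective _ injman, hMcov]
  -- score of the candidates c_g
  have sc_cg : ∀ s0 (g : GElem ν'), sck 4 (play V zp s0 cover) (Cand.cg g)
      = (2*ν'+5) + (if Cand.cg g ∈ topk 4 s0 then 1 else 0) := by
    intro s0 g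
    have hchar : ∀ i, i ≠ Voter.v0 →
        (Cand.cg g ∈ topk 4 (play V zp s0 cover i) ↔ i ∈ insert (Voter.man (sg g))
          (Finset.univ.image (Voter.uij g))) := by
      intro i hne
      rcases i with _ | s | _ | j | ⟨g', j⟩
      · exact absurd rfl hne
      · rcases ha : cover s with _ | _
        · rw [show play V zp s0 cover (Voter.man s) = V (Voter.man s) by simp [play, ha],
            htman s]
          simp only [Dset, Finset.mem_image, Finset.mem_insert, Voter.man.injEq,
            Finset.mem_univ, true_and]
          constructor
          · intro h; exact absurd h (by simp)
          · rintro (rfl | ⟨x, hx⟩)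
            · rw [hcov_sg g] at ha; exact absurd ha (by simp)
            · exact absurd hx (by simp)
        · rw [show play V zp s0 cover (Voter.man s) = zp s by simp [play, ha], hzp s]
          have hiff : g ∈ Gset σ0 s ↔ s = sg g :=
            ⟨fun h => hsg_uniq g s ha h, fun h => h ▸ hg_sg g⟩
          simp only [Cset, Finset.mem_union, Finset.mem_image, Finset.mem_singleton,
            Finset.mem_insert, Voter.man.injEq, Cand.cg.injEq, Finset.mem_univ, true_and]
          constructor
          · rintro (⟨g'', hg'', rfl⟩ | he)
            · exact Or.inl (hiff.mp hg'')
            · exact absurd he (by simp)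
          · rintro (rfl | ⟨x, hx⟩)
            · exact Or.inl ⟨g, hiff.mpr rfl, rfl⟩
            · exact absurd hx (by simp)
      · rw [show play V zp s0 cover Voter.u = V Voter.u from rfl, htu]
        simp [Dcset]
      · rw [show play V zp s0 cover (Voter.uj j) = V (Voter.uj j) from rfl, htuj j]
        simp [Eset]
      · rw [show play V zp s0 cover (Voter.uij g' j) = V (Voter.uij g' j) from rfl, htuij g' j]
        by_cases hgg : g = g'
        · subst hgg; simp [Fset]
        · simp [Fset, hgg, Ne.symm hgg]
    rw [hscore s0 (Cand.cg g) _ (by simp) hchar, Finset.card_insert_of_notMem (by simp),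
      Finset.card_image_of_injective _ (injuij g)]
    simp
    -- tie-breaking order helpers
  have tb_le : ∀ {x y : Cand ν' μ0}, tb.lt x y → tb.le x y :=
    fun h => @le_of_lt _ tb.toPartialOrder.toPreorder _ _ h
  have tb_refl : ∀ x : Cand ν' μ0, tb.le x x :=
    fun x => @le_refl _ tb.toPartialOrder.toPreorder x
  have tb_trans : ∀ {x y z : Cand ν' μ0}, tb.lt x y → tb.lt y z → tb.lt x z :=
    fun h1 h2 => @lt_trans _ tb.toPartialOrder.toPreorder _ _ _ h1 h2
  have tb_cg_c1 : ∀ g : GElem ν', tb.le (Cand.cg g) (Cand.cg (Sum.inl 0)) := by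
    rintro (t | g')
    · by_cases ht : t = 0
      · subst ht; exact tb_refl _
      · exact tb_le (htb4 0 t (Fin.pos_of_ne_zero ht))
    · exact tb_le (htb5 0 g')
  -- voter 0 preferences
  have z0_asymm : ∀ {x y : Cand ν' μ0},
      (V Voter.v0).lt x y → ¬ (V Voter.v0).lt y x := fun h => lin_asymm (V Voter.v0) h
  have z0_c1_lt_p : (V Voter.v0).lt (Cand.cg (Sum.inl 0)) Cand.p :=
    hz0.2 ⟨1, by norm_num⟩ ⟨2, by norm_num⟩ (by norm_num) Cand.p
      (Finset.mem_singleton_self _) (Cand.cg (Sum.inl 0)) (Finset.mem_singleton_self _)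
  have z0_c_lt_p : (V Voter.v0).lt Cand.c Cand.p :=
    hz0.2 ⟨1, by norm_num⟩ ⟨3, by norm_num⟩ (by norm_num) Cand.p
      (Finset.mem_singleton_self _) Cand.c (Finset.mem_singleton_self _)
  have z0_w_lt_p : (V Voter.v0).lt Cand.w Cand.p :=
    hz0.2 ⟨1, by norm_num⟩ ⟨5, by norm_num⟩ (by norm_num) Cand.p
      (Finset.mem_singleton_self _) Cand.w
      (by refine Finset.mem_sdiff.mpr ⟨Finset.mem_univ _, ?_⟩; simp [D0set, Cpset])
  have z0_cg_lt_p : ∀ g, (V Voter.v0).lt (Cand.cg g) Cand.p := by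
    intro g
    by_cases hg1 : g = Sum.inl 0
    · subst hg1; exact z0_c1_lt_p
    · refine hz0.2 ⟨1, by norm_num⟩ ⟨4, by norm_num⟩ (by norm_num) Cand.p
        (Finset.mem_singleton_self _) (Cand.cg g) ?_
      refine Finset.mem_sdiff.mpr ⟨?_, ?_⟩
      · simp [Cpset]
      · simp [hg1]
  have z0_c_lt_c1 : (V Voter.v0).lt Cand.c (Cand.cg (Sum.inl 0)) :=
    hz0.2 ⟨2, by norm_num⟩ ⟨3, by norm_num⟩ (by norm_num) (Cand.cg (Sum.inl 0))
      (Finset.mem_singleton_self _) Cand.c (Finset.mem_singleton_self _)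
  -- winner lemmas at the cover profile
  have Lw : ∀ s0 : LinearOrder (Cand ν' μ0), (∀ g, Cand.cg g ∉ topk 4 s0) →
      Cand.w ∈ topk 4 s0 → winner 4 tb (play V zp s0 cover) = Cand.w := by
    intro s0 hgs hw
    have hsw : sck 4 (play V zp s0 cover) Cand.w = 2*ν'+4+1 := by rw [sc_w s0, if_pos hw]
    apply winner_eq_of
    · intro y
      rcases y with _ | _ | _ | g | ⟨o, k⟩ | k | ⟨j, k⟩ | ⟨g, j, k⟩
      · rw [hsw]
      · rw [sc_c s0, hsw]; split_ifs <;> omega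
      · rw [sc_p s0, hsw]; split_ifs <;> omega
      · rw [sc_cg s0 g, if_neg (hgs g), hsw]; all_goals omega
      · have := hdummy s0 cover (Cand.d o k) (fun h => h); rw [hsw]; all_goals omega
      · have := hdummy s0 cover (Cand.dc k) (fun h => h); rw [hsw]; all_goals omega
      · have := hdummy s0 cover (Cand.e j k) (fun h => h); rw [hsw]; all_goals omega
      · have := hdummy s0 cover (Cand.f g j k) (fun h => h); rw [hsw]; all_goals omega
    · intro y hy
      rcases y with _ | _ | _ | g | ⟨o, k⟩ | k | ⟨j, k⟩ | ⟨g, j, k⟩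
      · exact tb_refl _
      · exact tb_le htb1
      · exact tb_le (tb_trans htb2 htb1)
      · exact tb_le (tb_trans (htb3 g) (tb_trans htb2 htb1))
      · exfalso; have := hdummy s0 cover (Cand.d o k) (fun h => h); rw [hsw] at hy; all_goals omega
      · exfalso; have := hdummy s0 cover (Cand.dc k) (fun h => h); rw [hsw] at hy; all_goals omega
      · exfalso; have := hdummy s0 cover (Cand.e j k) (fun h => h); rw [hsw] at hy; all_goals omega
      · exfalso; have := hdummy s0 cover (Cand.f g j k) (fun h => h); rw [hsw] at hy; all_goals omega
  have Lc : ∀ s0 : LinearOrder (Cand ν' μ0), (∀ g, Cand.cg g ∉ topk 4 s0) →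
      Cand.w ∉ topk 4 s0 → Cand.c ∈ topk 4 s0 →
      winner 4 tb (play V zp s0 cover) = Cand.c := by
    intro s0 hgs hw hc
    have hsc : sck 4 (play V zp s0 cover) Cand.c = 2*ν'+4+1 := by rw [sc_c s0, if_pos hc]
    apply winner_eq_of
    · intro y
      rcases y with _ | _ | _ | g | ⟨o, k⟩ | k | ⟨j, k⟩ | ⟨g, j, k⟩
      · rw [sc_w s0, if_neg hw, hsc]; all_goals omega
      · rw [hsc]
      · rw [sc_p s0, hsc]; split_ifs <;> omega
      · rw [sc_cg s0 g, if_neg (hgs g), hsc]; all_goals omega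
      · have := hdummy s0 cover (Cand.d o k) (fun h => h); rw [hsc]; all_goals omega
      · have := hdummy s0 cover (Cand.dc k) (fun h => h); rw [hsc]; all_goals omega
      · have := hdummy s0 cover (Cand.e j k) (fun h => h); rw [hsc]; all_goals omega
      · have := hdummy s0 cover (Cand.f g j k) (fun h => h); rw [hsc]; all_goals omega
    · intro y hy
      rcases y with _ | _ | _ | g | ⟨o, k⟩ | k | ⟨j, k⟩ | ⟨g, j, k⟩
      · exfalso; rw [sc_w s0, if_neg hw, hsc] at hy; all_goals omega
      · exact tb_refl _
      · exact tb_le htb2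
      · exact tb_le (tb_trans (htb3 g) htb2)
      · exfalso; have := hdummy s0 cover (Cand.d o k) (fun h => h); rw [hsc] at hy; all_goals omega
      · exfalso; have := hdummy s0 cover (Cand.dc k) (fun h => h); rw [hsc] at hy; all_goals omega
      · exfalso; have := hdummy s0 cover (Cand.e j k) (fun h => h); rw [hsc] at hy; all_goals omega
      · exfalso; have := hdummy s0 cover (Cand.f g j k) (fun h => h); rw [hsc] at hy; all_goals omega
  have Lp : ∀ s0 : LinearOrder (Cand ν' μ0), (∀ g, Cand.cg g ∉ topk 4 s0) →
      Cand.w ∉ topk 4 s0 → Cand.c ∉ topk 4 s0 → Cand.p ∈ topk 4 s0 →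
      winner 4 tb (play V zp s0 cover) = Cand.p := by
    intro s0 hgs hw hc hp
    have hsp : sck 4 (play V zp s0 cover) Cand.p = 2*ν'+4+1 := by rw [sc_p s0, if_pos hp]
    apply winner_eq_of
    · intro y
      rcases y with _ | _ | _ | g | ⟨o, k⟩ | k | ⟨j, k⟩ | ⟨g, j, k⟩
      · rw [sc_w s0, if_neg hw, hsp]; all_goals omega
      · rw [sc_c s0, if_neg hc, hsp]; all_goals omega
      · rw [hsp]
      · rw [sc_cg s0 g, if_neg (hgs g), hsp]; all_goals omega
      · have := hdummy s0 cover (Cand.d o k) (fun h => h); rw [hsp]; all_goals omega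
      · have := hdummy s0 cover (Cand.dc k) (fun h => h); rw [hsp]; all_goals omega
      · have := hdummy s0 cover (Cand.e j k) (fun h => h); rw [hsp]; all_goals omega
      · have := hdummy s0 cover (Cand.f g j k) (fun h => h); rw [hsp]; all_goals omega
    · intro y hy
      rcases y with _ | _ | _ | g | ⟨o, k⟩ | k | ⟨j, k⟩ | ⟨g, j, k⟩
      · exfalso; rw [sc_w s0, if_neg hw, hsp] at hy; all_goals omega
      · exfalso; rw [sc_c s0, if_neg hc, hsp] at hy; all_goals omega
      · exact tb_refl _
      · exact tb_le (htb3 g)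
      · exfalso; have := hdummy s0 cover (Cand.d o k) (fun h => h); rw [hsp] at hy; all_goals omega
      · exfalso; have := hdummy s0 cover (Cand.dc k) (fun h => h); rw [hsp] at hy; all_goals omega
      · exfalso; have := hdummy s0 cover (Cand.e j k) (fun h => h); rw [hsp] at hy; all_goals omega
      · exfalso; have := hdummy s0 cover (Cand.f g j k) (fun h => h); rw [hsp] at hy; all_goals omega
  have Lc1 : ∀ s0 : LinearOrder (Cand ν' μ0), (∀ g, Cand.cg g ∉ topk 4 s0) →
      Cand.w ∉ topk 4 s0 → Cand.c ∉ topk 4 s0 → Cand.p ∉ topk 4 s0 →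
      winner 4 tb (play V zp s0 cover) = Cand.cg (Sum.inl 0) := by
    intro s0 hgs hw hc hp
    have hsc1 : sck 4 (play V zp s0 cover) (Cand.cg (Sum.inl 0)) = 2*ν'+5 := by
      rw [sc_cg s0 _, if_neg (hgs _)]
    apply winner_eq_of
    · intro y
      rcases y with _ | _ | _ | g | ⟨o, k⟩ | k | ⟨j, k⟩ | ⟨g, j, k⟩
      · rw [sc_w s0, if_neg hw, hsc1]; all_goals omega
      · rw [sc_c s0, if_neg hc, hsc1]; all_goals omega
      · rw [sc_p s0, if_neg hp, hsc1]; all_goals omega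
      · rw [sc_cg s0 g, if_neg (hgs g), hsc1]
      · have := hdummy s0 cover (Cand.d o k) (fun h => h); rw [hsc1]; all_goals omega
      · have := hdummy s0 cover (Cand.dc k) (fun h => h); rw [hsc1]; all_goals omega
      · have := hdummy s0 cover (Cand.e j k) (fun h => h); rw [hsc1]; all_goals omega
      · have := hdummy s0 cover (Cand.f g j k) (fun h => h); rw [hsc1]; all_goals omega
    · intro y hy
      rcases y with _ | _ | _ | g | ⟨o, k⟩ | k | ⟨j, k⟩ | ⟨g, j, k⟩
      · exfalso; rw [sc_w s0, if_neg hw, hsc1] at hy; all_goals omega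
      · exfalso; rw [sc_c s0, if_neg hc, hsc1] at hy; all_goals omega
      · exfalso; rw [sc_p s0, if_neg hp, hsc1] at hy; all_goals omega
      · exact tb_cg_c1 g
      · exfalso; have := hdummy s0 cover (Cand.d o k) (fun h => h); rw [hsc1] at hy; all_goals omega
      · exfalso; have := hdummy s0 cover (Cand.dc k) (fun h => h); rw [hsc1] at hy; all_goals omega
      · exfalso; have := hdummy s0 cover (Cand.e j k) (fun h => h); rw [hsc1] at hy; all_goals omega
      · exfalso; have := hdummy s0 cover (Cand.f g j k) (fun h => h); rw [hsc1] at hy; all_goals omega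
  have Lcg : ∀ s0 : LinearOrder (Cand ν' μ0), (∃ g, Cand.cg g ∈ topk 4 s0) →
      ∃ g', winner 4 tb (play V zp s0 cover) = Cand.cg g' := by
    intro s0 hex
    obtain ⟨g0, hg0⟩ := hex
    have h1 : sck 4 (play V zp s0 cover) (Cand.cg g0) = 2*ν'+5+1 := by
      rw [sc_cg s0 g0, if_pos hg0]
    have h2 := winner_le_sck 4 tb (play V zp s0 cover) (Cand.cg g0)
    rw [h1] at h2
    rcases hW : winner 4 tb (play V zp s0 cover) with _ | _ | _ | g' | ⟨o, k⟩ | k | ⟨j, k⟩ | ⟨g, j, k⟩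
    · exfalso; rw [hW, sc_w s0] at h2; split_ifs at h2 <;> omega
    · exfalso; rw [hW, sc_c s0] at h2; split_ifs at h2 <;> omega
    · exfalso; rw [hW, sc_p s0] at h2; split_ifs at h2 <;> omega
    · exact ⟨g', rfl⟩
    · exfalso; rw [hW] at h2
      have := hdummy s0 cover (Cand.d o k) (fun h => h); all_goals omega
    · exfalso; rw [hW] at h2
      have := hdummy s0 cover (Cand.dc k) (fun h => h); all_goals omega
    · exfalso; rw [hW] at h2
      have := hdummy s0 cover (Cand.e j k) (fun h => h); all_goals omega
    · exfalso; rw [hW] at h2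
      have := hdummy s0 cover (Cand.f g j k) (fun h => h); all_goals omega
  -- membership facts for the special votes
  have z2_p : Cand.p ∈ topk 4 z0'' := by rw [hz0'']; simp
  have z2_w : Cand.w ∉ topk 4 z0'' := by rw [hz0'']; simp [D0set]
  have z2_c : Cand.c ∉ topk 4 z0'' := by rw [hz0'']; simp [D0set]
  have z2_cg : ∀ g, Cand.cg g ∉ topk 4 z0'' := by intro g; rw [hz0'']; simp [D0set]
  have z1_c : Cand.c ∈ topk 4 z0' := by rw [hz0']; simp
  have z1_w : Cand.w ∉ topk 4 z0' := by rw [hz0']; simp [D0set]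
  have z1_cg : ∀ g, Cand.cg g ∉ topk 4 z0' := by intro g; rw [hz0']; simp [D0set]
  have t_w : Cand.w ∉ topk 4 (V Voter.v0) := by rw [ht0]; simp [D0set]
  have t_c : Cand.c ∉ topk 4 (V Voter.v0) := by rw [ht0]; simp [D0set]
  have t_p : Cand.p ∉ topk 4 (V Voter.v0) := by rw [ht0]; simp [D0set]
  have t_cg : ∀ g, Cand.cg g ∉ topk 4 (V Voter.v0) := by intro g; rw [ht0]; simp [D0set]
  -- conclusion
  constructor
  · -- no strategy weakly dominates z0''
    intro s hWD
    have Wz2 : winner 4 tb (play V zp z0'' cover) = Cand.p := Lp z0'' z2_cg z2_w z2_c z2_p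
    by_cases hgex : ∃ g, Cand.cg g ∈ topk 4 s
    · obtain ⟨g', hW⟩ := Lcg s hgex
      rcases hWD.1 cover with heq | hlt
      · rw [hW, Wz2] at heq; cases heq
      · rw [hW, Wz2] at hlt; exact z0_asymm (z0_cg_lt_p g') hlt
    · push_neg at hgex
      by_cases hw : Cand.w ∈ topk 4 s
      · have hW := Lw s hgex hw
        rcases hWD.1 cover with heq | hlt
        · rw [hW, Wz2] at heq; cases heq
        · rw [hW, Wz2] at hlt; exact z0_asymm z0_w_lt_p hlt
      · by_cases hc : Cand.c ∈ topk 4 s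
        · have hW := Lc s hgex hw hc
          rcases hWD.1 cover with heq | hlt
          · rw [hW, Wz2] at heq; cases heq
          · rw [hW, Wz2] at hlt; exact z0_asymm z0_c_lt_p hlt
        · by_cases hp : Cand.p ∈ topk 4 s
          · -- s and z0'' give the same winner for every action profile
            have hkey : ∀ a, winner 4 tb (play V zp s a) = winner 4 tb (play V zp z0'' a) := by
              intro a
              have hms : ∀ y : Cand ν' μ0, IsMain y →
                  sck 4 (play V zp s a) y = sck 4 (play V zp z0'' a) y := by
                intro y hy
                apply sck_congr
                intro i
                rcases i with _ | s' | _ | j | ⟨g, j⟩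
                · show y ∈ topk 4 s ↔ y ∈ topk 4 z0''
                  rcases y with _ | _ | _ | g | ⟨o, k⟩ | k | ⟨j, k⟩ | ⟨g, j, k⟩
                  · exact iff_of_false hw z2_w
                  · exact iff_of_false hc z2_c
                  · exact iff_of_true hp z2_p
                  · exact iff_of_false (hgex g) (z2_cg g)
                  · exact (hy : False).elim
                  · exact (hy : False).elim
                  · exact (hy : False).elim
                  · exact (hy : False).elim
                · exact Iff.rfl
                · exact Iff.rfl
                · exact Iff.rfl
                · exact Iff.rfl
              apply winner_congr
              intro x
              constructor
              · intro hx y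
                have hxm : IsMain x := by
                  by_contra hxm
                  have h1 := hx Cand.w
                  have h2 := hw4 s a
                  have h3 := hdummy s a x hxm
                  omega
                by_cases hym : IsMain y
                · rw [← hms y hym, ← hms x hxm]; exact hx y
                · have h1 := hdummy z0'' a y hym
                  have h2 := hw4 z0'' a
                  have h3 := hms Cand.w trivial
                  have h4 := hx Cand.w
                  have h5 := hms x hxm
                  omega
              · intro hx y
                have hxm : IsMain x := by
                  by_contra hxm
                  have h1 := hx Cand.w
                  have h2 := hw4 z0'' a
                  have h3 := hdummy z0'' a x hxm
                  omega
                by_cases hym : IsMain y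
                · rw [hms y hym, hms x hxm]; exact hx y
                · have h1 := hdummy s a y hym
                  have h2 := hw4 s a
                  have h3 := hms Cand.w trivial
                  have h4 := hx Cand.w
                  have h5 := hms x hxm
                  omega
            obtain ⟨a, ha⟩ := hWD.2
            rw [hkey a] at ha
            exact lin_irrefl (V Voter.v0) _ ha
          · have hW := Lc1 s hgex hw hc hp
            rcases hWD.1 cover with heq | hlt
            · rw [hW, Wz2] at heq; cases heq
            · rw [hW, Wz2] at hlt; exact z0_asymm (z0_cg_lt_p _) hlt
  · -- z0' is not an improving strategy
    intro hWD
    have W1 : winner 4 tb (play V zp z0' cover) = Cand.c := Lc z0' z1_cg z1_w z1_c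
    have W2 : winner 4 tb (play V zp (V Voter.v0) cover) = Cand.cg (Sum.inl 0) :=
      Lc1 (V Voter.v0) t_cg t_w t_c t_p
    rcases hWD.1 cover with heq | hlt
    · rw [W1, W2] at heq; cases heq
    · rw [W1, W2] at hlt; exact z0_asymm z0_c_lt_c1 hlt

end Paper
end
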